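/- arXiv:1403.5945 — 3 statements merged into one kernel-verified Lean document; each statement's English description precedes it below -/
import Mathlib

section
/- Let A_k = {0 = a₀ < ⋯ < a_k} be a restricted basis with range n = 2a_k, let 0 < i < k−1, and set B_j = a_k − {a_{i+1}, …, a_k} with j = k−1−i. Then the prefix A_i = {a₀,…,a_i} satisfies n₂(A_i) ≥ a_{i+1} − 1, and B_j satisfies n₂(B_j) ≥ (a_k − a_i) − 1. -/
open Pointwise

/-- `n2 S` is the largest `m` such that every integer in `[0, m]` is a sum of two
elements of `S`. -/
noncomputable def n2 (S : Finset ℕ) : ℕ := sSup {m | Finset.Icc 0 m ⊆ S + S}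

lemma le_n2 {S : Finset ℕ} {m : ℕ} (h : Finset.Icc 0 m ⊆ S + S) : m ≤ n2 S := by
  have hmem : m ∈ {m | Finset.Icc 0 m ⊆ S + S} := h
  refine le_csSup ⟨2 * S.sup id, ?_⟩ hmem
  intro b hb
  have hb0 : b ∈ S + S := hb (Finset.mem_Icc.mpr ⟨Nat.zero_le _, le_refl _⟩)
  obtain ⟨x, hx, y, hy, rfl⟩ := Finset.mem_add.mp hb0
  have h1 := Finset.le_sup (f := id) hx
  have h2 := Finset.le_sup (f := id) hy
  simp only [id] at h1 h2
  omega

theorem prefix_suffix_range_bounds (k : ℕ) (a : ℕ → ℕ)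
    (h0 : a 0 = 0) (hmono : ∀ m < k, a m < a (m + 1))
    (hrest : Finset.Icc 0 (2 * a k) ⊆
      ((Finset.range (k + 1)).image a) + ((Finset.range (k + 1)).image a))
    (i : ℕ) (hi : 0 < i) (hik : i < k - 1) :
    a (i + 1) - 1 ≤ n2 ((Finset.range (i + 1)).image a) ∧
    (a k - a i) - 1 ≤ n2 (((Finset.Icc (i + 1) k).image a).image (fun x => a k - x)) := by
  have key : ∀ s, s ≤ k → ∀ r, r < s → a r < a s := by
    intro s hs
    induction s with
    | zero => omega
    | succ n ih =>
      intro r hr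
      have hn : a n < a (n + 1) := hmono n (by omega)
      rcases Nat.lt_succ_iff_lt_or_eq.mp hr with h | h
      · exact lt_trans (ih (by omega) r h) hn
      · subst h; exact hn
  have hle : ∀ r, r ≤ k → a r ≤ a k := by
    intro r hr
    rcases eq_or_lt_of_le hr with h | h
    · subst h; exact le_refl _
    · exact le_of_lt (key k le_rfl r h)
  have hik' : i + 1 ≤ k := by omega
  have hai : a i < a (i + 1) := hmono i (by omega)
  have haik : a (i + 1) ≤ a k := hle (i + 1) hik'
  have haik2 : a i < a k := key k le_rfl i (by omega)
  constructor
  · apply le_n2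
    intro m hm
    have hm' : m ≤ a (i + 1) - 1 := (Finset.mem_Icc.mp hm).2
    have hmlt : m < a (i + 1) := by omega
    have hm2 : m ∈ Finset.Icc 0 (2 * a k) := Finset.mem_Icc.mpr ⟨Nat.zero_le _, by omega⟩
    obtain ⟨x, hx, y, hy, hxy⟩ := Finset.mem_add.mp (hrest hm2)
    obtain ⟨r, hr, rfl⟩ := Finset.mem_image.mp hx
    obtain ⟨s, hs, rfl⟩ := Finset.mem_image.mp hy
    have hr' : r < k + 1 := Finset.mem_range.mp hr
    have hs' : s < k + 1 := Finset.mem_range.mp hs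
    have hri : r < i + 1 := by
      by_contra hc
      push_neg at hc
      have : a (i + 1) ≤ a r := by
        rcases eq_or_lt_of_le hc with h | h
        · rw [← h]
        · exact le_of_lt (key r (by omega) (i + 1) h)
      omega
    have hsi : s < i + 1 := by
      by_contra hc
      push_neg at hc
      have : a (i + 1) ≤ a s := by
        rcases eq_or_lt_of_le hc with h | h
        · rw [← h]
        · exact le_of_lt (key s (by omega) (i + 1) h)
      omega
    exact Finset.mem_add.mpr ⟨a r, Finset.mem_image.mpr ⟨r, Finset.mem_range.mpr hri, rfl⟩,
      a s, Finset.mem_image.mpr ⟨s, Finset.mem_range.mpr hsi, rfl⟩, hxy⟩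
  · apply le_n2
    intro m hm
    have hm' : m ≤ a k - a i - 1 := (Finset.mem_Icc.mp hm).2
    have hm2 : (2 * a k - m) ∈ Finset.Icc 0 (2 * a k) :=
      Finset.mem_Icc.mpr ⟨Nat.zero_le _, by omega⟩
    obtain ⟨x, hx, y, hy, hxy⟩ := Finset.mem_add.mp (hrest hm2)
    obtain ⟨r, hr, rfl⟩ := Finset.mem_image.mp hx
    obtain ⟨s, hs, rfl⟩ := Finset.mem_image.mp hy
    have hr' : r ≤ k := by have := Finset.mem_range.mp hr; omega
    have hs' : s ≤ k := by have := Finset.mem_range.mp hs; omega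
    have hrk : a r ≤ a k := hle r hr'
    have hsk : a s ≤ a k := hle s hs'
    have hri : i + 1 ≤ r := by
      by_contra hc
      push_neg at hc
      have : a r ≤ a i := by
        rcases Nat.lt_succ_iff_lt_or_eq.mp hc with h | h
        · exact le_of_lt (key i (by omega) r h)
        · rw [h]
      omega
    have hsi : i + 1 ≤ s := by
      by_contra hc
      push_neg at hc
      have : a s ≤ a i := by
        rcases Nat.lt_succ_iff_lt_or_eq.mp hc with h | h
        · exact le_of_lt (key i (by omega) s h)
        · rw [h]
      omega
    refine Finset.mem_add.mpr ⟨a k - a r, ?_, a k - a s, ?_, by omega⟩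
    · exact Finset.mem_image.mpr ⟨a r,
        Finset.mem_image.mpr ⟨r, Finset.mem_Icc.mpr ⟨hri, hr'⟩, rfl⟩, rfl⟩
    · exact Finset.mem_image.mpr ⟨a s,
        Finset.mem_image.mpr ⟨s, Finset.mem_Icc.mpr ⟨hsi, hs'⟩, rfl⟩, rfl⟩
end

section
/- Let n₂(k) denote the maximal range of an additive 2-basis with k nonzero elements, and n₂*(k) the maximal range among restricted bases. Then for any integer r > 1, n₂*(2r) ≤ 4·n₂(r−1) + 4. -/
open Pointwise

/-- `IsBasisRange k n` : there is an additive 2-basis `{0 = a₀ < ⋯ < a_k}`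
of nonnegative integers whose sumset covers `[0, n]`. -/
def IsBasisRange (k n : ℕ) : Prop :=
  ∃ a : ℕ → ℕ, a 0 = 0 ∧ (∀ m < k, a m < a (m + 1)) ∧
    Finset.Icc 0 n ⊆ ((Finset.range (k + 1)).image a) + ((Finset.range (k + 1)).image a)

/-- `n2max k` is the maximal range of an additive 2-basis with `k` nonzero elements. -/
noncomputable def n2max (k : ℕ) : ℕ := sSup {n | IsBasisRange k n}

/-- `IsRestrictedBasisRange k n` : there is a restricted basis of length `k`
with range `n = 2 a_k`. -/
def IsRestrictedBasisRange (k n : ℕ) : Prop :=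
  ∃ a : ℕ → ℕ, a 0 = 0 ∧ (∀ m < k, a m < a (m + 1)) ∧
    Finset.Icc 0 n ⊆ ((Finset.range (k + 1)).image a) + ((Finset.range (k + 1)).image a) ∧
    n = 2 * a k

/-- `n2star k` is the maximal range among restricted bases of length `k`. -/
noncomputable def n2star (k : ℕ) : ℕ := sSup {n | IsRestrictedBasisRange k n}

private lemma chainLt {a : ℕ → ℕ} {k : ℕ} (h : ∀ m < k, a m < a (m + 1)) :
    ∀ i j, i < j → j ≤ k → a i < a j := by
  intro i j hij hjk
  induction j with
  | zero => omega
  | succ j ih =>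
    rcases Nat.lt_succ_iff_lt_or_eq.mp hij with h' | h'
    · exact (ih h' (by omega)).trans (h j (by omega))
    · subst h'
      exact h _ (by omega)

private lemma chainLe {a : ℕ → ℕ} {k : ℕ} (h : ∀ m < k, a m < a (m + 1)) :
    ∀ i j, i ≤ j → j ≤ k → a i ≤ a j := by
  intro i j hij hjk
  rcases eq_or_lt_of_le hij with rfl | h'
  · exact le_rfl
  · exact (chainLt h i j h' hjk).le

private lemma bddBasis (k : ℕ) : BddAbove {n | IsBasisRange k n} := by
  refine ⟨(k + 1) * (k + 1), ?_⟩
  rintro n ⟨a, h0, hm, hsub⟩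
  have h1 := Finset.card_le_card hsub
  have h2 := Finset.card_add_le (s := (Finset.range (k + 1)).image a)
    (t := (Finset.range (k + 1)).image a)
  have h3 : ((Finset.range (k + 1)).image a).card ≤ k + 1 :=
    (Finset.card_image_le).trans (by simp)
  have h4 : (Finset.Icc 0 n).card = n + 1 := by simp
  have h5 : n + 1 ≤ (k + 1) * (k + 1) := by
    calc n + 1 = (Finset.Icc 0 n).card := h4.symm
    _ ≤ _ := h1
    _ ≤ _ := h2
    _ ≤ (k + 1) * (k + 1) := Nat.mul_le_mul h3 h3
  omega

theorem n2star_even_upper_bound (r : ℕ) (hr : 1 < r) :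
    n2star (2 * r) ≤ 4 * n2max (r - 1) + 4 := by
  obtain ⟨s, rfl⟩ : ∃ s, r = s + 1 := ⟨r - 1, by omega⟩
  refine csSup_le' ?_
  rintro n ⟨a, h0, hmono, hsub, hn2⟩
  simp only [Nat.add_sub_cancel]
  set K := 2 * (s + 1) with hK
  have key : ∀ i j, i < j → j ≤ K → a i < a j := chainLt hmono
  have keyle : ∀ i j, i ≤ j → j ≤ K → a i ≤ a j := chainLe hmono
  have har : a (s + 1) ≤ a K := keyle (s + 1) K (by omega) le_rfl
  have harlt : a (s + 1) < a K := key (s + 1) K (by omega) le_rfl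
  have har0 : 0 < a (s + 1) := by
    have := key 0 (s + 1) (by omega) (by omega)
    omega
  -- Step A : the small half is a basis for [0, a (s+1) - 1]
  have stepA : IsBasisRange s (a (s + 1) - 1) := by
    refine ⟨a, h0, fun m hm => hmono m (by omega), ?_⟩
    intro x hx
    rw [Finset.mem_Icc] at hx
    have hxlt : x < a (s + 1) := by omega
    have hxn : x ∈ Finset.Icc 0 n := by
      rw [Finset.mem_Icc]
      omega
    have hx2 := hsub hxn
    rw [Finset.mem_add] at hx2
    obtain ⟨u, hu, v, hv, huv⟩ := hx2
    rw [Finset.mem_image] at hu hv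
    obtain ⟨i, hi, rfl⟩ := hu
    obtain ⟨j, hj, rfl⟩ := hv
    rw [Finset.mem_range] at hi hj
    have hi' : i < s + 1 := by
      by_contra hc
      push_neg at hc
      have := keyle (s + 1) i hc (by omega)
      omega
    have hj' : j < s + 1 := by
      by_contra hc
      push_neg at hc
      have := keyle (s + 1) j hc (by omega)
      omega
    rw [Finset.mem_add]
    exact ⟨a i, Finset.mem_image.mpr ⟨i, Finset.mem_range.mpr hi', rfl⟩,
      a j, Finset.mem_image.mpr ⟨j, Finset.mem_range.mpr hj', rfl⟩, huv⟩
  -- Step B : the reflected small half is a basis for [0, a K - a (s+1) - 1]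
  set b : ℕ → ℕ := fun i => a K - a (K - i) with hb
  have hbval : ∀ i ≤ K, b (K - i) = a K - a i := by
    intro i hi
    have : K - (K - i) = i := by omega
    rw [hb]
    simp only
    rw [this]
  have stepB : IsBasisRange s (b (s + 1) - 1) := by
    refine ⟨b, by simp [hb], ?_, ?_⟩
    · intro m hm
      have h1 : a (K - (m + 1)) < a (K - m) := key _ _ (by omega) (by omega)
      have h2 : a (K - m) ≤ a K := keyle _ _ (by omega) le_rfl
      have e1 : b m = a K - a (K - m) := rfl
      have e2 : b (m + 1) = a K - a (K - (m + 1)) := rfl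
      omega
    · intro y hy
      rw [Finset.mem_Icc] at hy
      have hbs : b (s + 1) = a K - a (s + 1) := by
        have : K - (s + 1) = s + 1 := by omega
        rw [hb]; simp only; rw [this]
      have hbpos : 0 < b (s + 1) := by omega
      have hylt : y < a K - a (s + 1) := by omega
      have hxn : n - y ∈ Finset.Icc 0 n := by
        rw [Finset.mem_Icc]; omega
      have hx2 := hsub hxn
      rw [Finset.mem_add] at hx2
      obtain ⟨u, hu, v, hv, huv⟩ := hx2
      rw [Finset.mem_image] at hu hv
      obtain ⟨i, hi, rfl⟩ := hu
      obtain ⟨j, hj, rfl⟩ := hv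
      rw [Finset.mem_range] at hi hj
      have hiK : a i ≤ a K := keyle i K (by omega) le_rfl
      have hjK : a j ≤ a K := keyle j K (by omega) le_rfl
      -- y = (a K - a i) + (a K - a j)
      have hsum : (a K - a i) + (a K - a j) = y := by omega
      have hi' : s + 1 < i := by
        by_contra hc
        push_neg at hc
        have := keyle i (s + 1) hc (by omega)
        omega
      have hj' : s + 1 < j := by
        by_contra hc
        push_neg at hc
        have := keyle j (s + 1) hc (by omega)
        omega
      rw [Finset.mem_add]
      refine ⟨b (K - i), Finset.mem_image.mpr ⟨K - i, Finset.mem_range.mpr (by omega), rfl⟩,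
        b (K - j), Finset.mem_image.mpr ⟨K - j, Finset.mem_range.mpr (by omega), rfl⟩, ?_⟩
      rw [hbval i (by omega), hbval j (by omega)]
      exact hsum
  have hA : a (s + 1) - 1 ≤ n2max s := le_csSup (bddBasis s) stepA
  have hB : b (s + 1) - 1 ≤ n2max s := le_csSup (bddBasis s) stepB
  have hbs : b (s + 1) = a K - a (s + 1) := by
    have : K - (s + 1) = s + 1 := by omega
    rw [hb]; simp only; rw [this]
  omega
end

section
/- Let A_k be a restricted basis with range n = 2a_k of length k ≥ 3, let 0 < i < k−1 and j = k−1−i. If every basis of length j−1 has range at most M, then the prefix A_i satisfies n₂(A_i) ≥ a_k − M − 2. -/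
open Pointwise

lemma n2_bdd (S : Finset ℕ) : BddAbove {m | Finset.Icc 0 m ⊆ S + S} := by
  refine ⟨2 * S.sup id, fun m hm => ?_⟩
  have hmem : m ∈ S + S := hm (Finset.mem_Icc.mpr ⟨Nat.zero_le _, le_refl _⟩)
  rw [Finset.mem_add] at hmem
  obtain ⟨x, hx, y, hy, hxy⟩ := hmem
  have h1 : x ≤ S.sup id := Finset.le_sup (f := id) hx
  have h2 : y ≤ S.sup id := Finset.le_sup (f := id) hy
  omega

lemma n2_ge (S : Finset ℕ) {m : ℕ} (hm : Finset.Icc 0 m ⊆ S + S) : m ≤ n2 S :=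
  le_csSup (n2_bdd S) hm

lemma n2_succ_not (S : Finset ℕ) : ∃ s ≤ n2 S + 1, s ∉ S + S := by
  by_contra h
  push_neg at h
  have hsub : Finset.Icc 0 (n2 S + 1) ⊆ S + S := by
    intro x hx
    exact h x (Finset.mem_Icc.mp hx).2
  have := n2_ge S hsub
  omega

theorem prefix_range_lower_bound (k : ℕ) (hk : 3 ≤ k) (a : ℕ → ℕ)
    (h0 : a 0 = 0) (hmono : ∀ m < k, a m < a (m + 1))
    (hrest : Finset.Icc 0 (2 * a k) ⊆
      ((Finset.range (k + 1)).image a) + ((Finset.range (k + 1)).image a))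
    (i j : ℕ) (hi : 0 < i) (hik : i < k - 1) (hj : j = k - 1 - i)
    (M : ℕ)
    (hM : ∀ b : ℕ → ℕ, b 0 = 0 → (∀ m < j - 1, b m < b (m + 1)) →
      n2 ((Finset.range j).image b) ≤ M) :
    a k - M - 2 ≤ n2 ((Finset.range (i + 1)).image a) := by
  by_contra hcon
  push_neg at hcon
  set A := (Finset.range (i + 1)).image a with hAdef
  set r := n2 A with hrdef
  -- r < a k - M - 2, so a k ≥ r + M + 3
  have hak : r + M + 3 ≤ a k := by omega
  -- strict monotonicity up to k
  have hlt : ∀ p q, p < q → q ≤ k → a p < a q := by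
    intro p q hpq hq
    induction q with
    | zero => omega
    | succ n ih =>
      rcases Nat.lt_succ_iff_lt_or_eq.mp hpq with h' | h'
      · exact (ih (by omega) (by omega)).trans (hmono n (by omega))
      · subst h'; exact hmono p (by omega)
  have hle : ∀ p q, p ≤ q → q ≤ k → a p ≤ a q := by
    intro p q hpq hq
    rcases eq_or_lt_of_le hpq with rfl | h'
    · exact le_refl _
    · exact (hlt _ _ h' hq).le
  -- there is s ≤ r + 1 not in A + A
  obtain ⟨s, hs1, hs2⟩ := n2_succ_not A
  -- s is representable in the full basis
  have hsIcc : s ∈ Finset.Icc 0 (2 * a k) := Finset.mem_Icc.mpr ⟨Nat.zero_le _, by omega⟩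
  have hsrep := hrest hsIcc
  rw [Finset.mem_add] at hsrep
  obtain ⟨x, hx, y, hy, hxy⟩ := hsrep
  obtain ⟨p, hp, rfl⟩ := Finset.mem_image.mp hx
  obtain ⟨q, hq, rfl⟩ := Finset.mem_image.mp hy
  rw [Finset.mem_range] at hp hq
  -- a (i+1) ≤ r + 1
  have hi1 : a (i + 1) ≤ r + 1 := by
    by_cases hcase : p ≤ i ∧ q ≤ i
    · exfalso
      apply hs2
      rw [← hxy]
      exact Finset.add_mem_add
        (Finset.mem_image.mpr ⟨p, Finset.mem_range.mpr (by omega), rfl⟩)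
        (Finset.mem_image.mpr ⟨q, Finset.mem_range.mpr (by omega), rfl⟩)
    · have : i + 1 ≤ p ∨ i + 1 ≤ q := by omega
      rcases this with h' | h'
      · have := hle (i + 1) p h' (by omega); omega
      · have := hle (i + 1) q h' (by omega); omega
  -- the reversed suffix basis
  set b : ℕ → ℕ := fun m => a k - a (k - m) with hbdef
  have hb0 : b 0 = 0 := by simp [hbdef]
  have hbmono : ∀ m < j - 1, b m < b (m + 1) := by
    intro m hm
    have h1 : a (k - (m + 1)) < a (k - m) := hlt _ _ (by omega) (by omega)
    have h2 : a (k - m) ≤ a k := hle _ _ (by omega) (le_refl _)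
    simp only [hbdef]
    omega
  have hBM : n2 ((Finset.range j).image b) ≤ M := hM b hb0 hbmono
  -- coverage of [0, a k - r - 2] by B + B
  have hcov : Finset.Icc 0 (a k - r - 2) ⊆
      ((Finset.range j).image b) + ((Finset.range j).image b) := by
    intro u hu
    have hu' : u + r + 2 ≤ a k := by
      have := (Finset.mem_Icc.mp hu).2
      omega
    have htIcc : 2 * a k - u ∈ Finset.Icc 0 (2 * a k) := Finset.mem_Icc.mpr ⟨Nat.zero_le _, by omega⟩
    have htrep := hrest htIcc
    rw [Finset.mem_add] at htrep
    obtain ⟨x, hx, y, hy, hxy2⟩ := htrep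
    obtain ⟨p', hp', rfl⟩ := Finset.mem_image.mp hx
    obtain ⟨q', hq', rfl⟩ := Finset.mem_image.mp hy
    rw [Finset.mem_range] at hp' hq'
    have heq : a p' + a q' + u = 2 * a k := by omega
    have hpk : a p' ≤ a k := hle _ _ (by omega) (le_refl _)
    have hqk : a q' ≤ a k := hle _ _ (by omega) (le_refl _)
    have hp2 : i + 2 ≤ p' := by
      by_contra h'
      push_neg at h'
      have := hle p' (i + 1) (by omega) (by omega)
      omega
    have hq2 : i + 2 ≤ q' := by
      by_contra h'
      push_neg at h'
      have := hle q' (i + 1) (by omega) (by omega)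
      omega
    have hmem1 : a k - a p' ∈ (Finset.range j).image b := by
      refine Finset.mem_image.mpr ⟨k - p', Finset.mem_range.mpr (by omega), ?_⟩
      simp only [hbdef]
      have : k - (k - p') = p' := by omega
      rw [this]
    have hmem2 : a k - a q' ∈ (Finset.range j).image b := by
      refine Finset.mem_image.mpr ⟨k - q', Finset.mem_range.mpr (by omega), ?_⟩
      simp only [hbdef]
      have : k - (k - q') = q' := by omega
      rw [this]
    have hu2 : (a k - a p') + (a k - a q') = u := by omega
    rw [← hu2]
    exact Finset.add_mem_add hmem1 hmem2
  have := n2_ge _ hcov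
  omega
end
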